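/- Let F = Q(√(-59)) and E = F(√(-2)). Then O_F + O_F·√(-2) = O_E, i.e., {a + b√(-2) : a, b ∈ O_F} is the full ring of integers of E. -/

import Mathlib

section
variable {E : Type*} [Field E] [CharZero E] {r s : E}

lemma rat_int_of_isIntegral {c : ℚ} (h : IsIntegral ℤ (c : E)) : ∃ k : ℤ, (k : ℚ) = c := by
  have hinj : Function.Injective (algebraMap ℚ E) := (algebraMap ℚ E).injective
  have h2 : IsIntegral ℤ c := by
    rw [← isIntegral_algHom_iff ((algebraMap ℚ E).toIntAlgHom) hinj]
    simpa [RingHom.toIntAlgHom, eq_ratCast] using h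
  exact IsIntegrallyClosed.isIntegral_iff.mp h2

lemma no_rat_sq_118 (c : ℚ) : c^2 ≠ 118 := by
  intro h
  have hint : IsIntegral ℤ ((c : ℚ) : ℚ) := by
    refine ⟨Polynomial.X^2 - Polynomial.C 118, ?_, ?_⟩
    · exact Polynomial.monic_X_pow_sub_C _ (by norm_num)
    · simp [h]
  obtain ⟨k, hk⟩ := IsIntegrallyClosed.isIntegral_iff.mp hint
  have hk2 : (k:ℚ)^2 = 118 := by rw [show ((k:ℚ)) = c from hk, h]
  have hk3 : k^2 = 118 := by exact_mod_cast hk2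
  have h1 : k ≤ 10 := by nlinarith
  have h2 : -10 ≤ k := by nlinarith
  interval_cases k <;> norm_num at hk3

lemma L0 (hr : r ^ 2 = -59) (p q : ℚ) (h : (p : E) + q * r = 0) : p = 0 ∧ q = 0 := by
  by_cases hq : q = 0
  · subst hq; norm_num at h; exact ⟨h, rfl⟩
  · exfalso
    have hrr : r = ((-(p/q) : ℚ) : E) := by
      have hq' : (q:E) ≠ 0 := by exact_mod_cast hq
      push_cast
      field_simp
      linear_combination h
    rw [hrr] at hr
    have : ((-(p/q) : ℚ)^2 : ℚ) = ((-59 : ℚ)) := by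
      have := hr
      push_cast at this ⊢
      exact_mod_cast this
    nlinarith [sq_nonneg (p/q)]

lemma Lmul (hr : r ^ 2 = -59) (hs : s ^ 2 = -2) (p q m n p' q' m' n' : ℚ) :
    ((p : E) + q * r + m * s + n * (r*s)) * ((p' : E) + q' * r + m' * s + n' * (r*s)) =
    ((p*p' - 59*(q*q') - 2*(m*m') + 118*(n*n') : ℚ) : E)
      + ((p*q' + q*p' - 2*(m*n') - 2*(n*m') : ℚ) : E) * r
      + ((p*m' + m*p' - 59*(q*n') - 59*(n*q') : ℚ) : E) * s
      + ((p*n' + n*p' + q*m' + m*q' : ℚ) : E) * (r*s) := by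
  push_cast
  linear_combination ((q*q' : E) + (q*n'+n*q')*s + n*n'*s^2) * hr
    + ((m*m' : E) + (m*n'+n*m')*r - 59*(n*n')) * hs

lemma L1 (hr : r ^ 2 = -59) (hs : s ^ 2 = -2) (p q m n : ℚ)
    (h : (p : E) + q * r + m * s + n * (r*s) = 0) : p = 0 ∧ q = 0 ∧ m = 0 ∧ n = 0 := by
  by_cases hmn : m = 0 ∧ n = 0
  · obtain ⟨rfl, rfl⟩ := hmn
    norm_num at h
    have := L0 hr p q (by linear_combination h)
    exact ⟨this.1, this.2, rfl, rfl⟩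
  · exfalso
    have hD : m^2 + 59*n^2 ≠ 0 := by
      intro hD0
      apply hmn
      constructor <;> nlinarith [sq_nonneg m, sq_nonneg n]
    have hseq : s * ((m:E) + n * r) = -((p:E) + q*r) := by linear_combination h
    have hsd : s * ((m^2 + 59*n^2 : ℚ):E) =
        ((-(p*m + 59*(q*n)) : ℚ):E) + ((p*n - q*m : ℚ):E) * r := by
      push_cast
      linear_combination ((m:E) - n*r) * hseq + (s*(n:E)^2 + ((q:E)*(n:E))) * hr
    have hsq2 : (((-(p*m + 59*(q*n)) : ℚ):E) + ((p*n - q*m : ℚ):E)*r)^2 =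
        -2 * (((m^2 + 59*n^2 : ℚ):E))^2 := by
      push_cast
      push_cast at hsd
      linear_combination (-(s*((m:E)^2 + 59*(n:E)^2)) - (-((p:E)*m + 59*((q:E)*n)) + ((p:E)*n - (q:E)*m)*r)) * hsd
        + (((m:E)^2 + 59*(n:E)^2)^2) * hs
    have hcombo : (((-(p*m + 59*(q*n)))^2 - 59*(p*n - q*m)^2 + 2*(m^2 + 59*n^2)^2 : ℚ) : E)
        + ((2*((-(p*m + 59*(q*n)))*(p*n - q*m)) : ℚ) : E) * r = 0 := by
      push_cast
      push_cast at hsq2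
      linear_combination hsq2 - (((p:E)*n - (q:E)*m)^2)*hr
    obtain ⟨h1, h2⟩ := L0 hr _ _ hcombo
    set A : ℚ := -(p*m + 59*(q*n)) with hA
    set B : ℚ := p*n - q*m with hB
    set D : ℚ := m^2 + 59*n^2 with hDdef
    have hab : A * B = 0 := by linarith
    rcases mul_eq_zero.mp hab with hA0 | hB0
    · rw [hA0] at h1
      have hc : ((59*B/D : ℚ))^2 = 118 := by
        field_simp
        nlinarith
      exact no_rat_sq_118 _ hc
    · rw [hB0] at h1
      have : D = 0 := by nlinarith [sq_nonneg A, sq_nonneg D]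
      exact hD this

end

section
variable {E : Type*} [Field E] [CharZero E] {r s : E}

lemma Lmul' (hr : r ^ 2 = -59) (hs : s ^ 2 = -2) (p q m n p' q' m' n' : ℚ) :
    ((p : E) + q * r + m * s + n * (r*s)) * ((p' : E) + q' * r + m' * s + n' * (r*s)) =
    ((p*p' - 59*(q*q') - 2*(m*m') + 118*(n*n') : ℚ) : E)
      + ((p*q' + q*p' - 2*(m*n') - 2*(n*m') : ℚ) : E) * r
      + ((p*m' + m*p' - 59*(q*n') - 59*(n*q') : ℚ) : E) * s
      + ((p*n' + n*p' + q*m' + m*q' : ℚ) : E) * (r*s) := by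
  push_cast
  linear_combination ((q*q' : E) + (q*n'+n*q')*s + n*n'*s^2) * hr
    + ((m*m' : E) + (m*n'+n*m')*r - 59*(n*n')) * hs

lemma Lrepr (hr : r ^ 2 = -59) (hs : s ^ 2 = -2)
    (hgen : IntermediateField.adjoin ℚ {r, s} = ⊤) (x : E) :
    ∃ c : ℚ × ℚ × ℚ × ℚ, x = (c.1 : E) + c.2.1 * r + c.2.2.1 * s + c.2.2.2 * (r*s) := by
  have halg : ∀ y ∈ ({r, s} : Set E), IsAlgebraic ℚ y := by
    rintro y (rfl | rfl)
    · exact (isAlgebraic_iff_isIntegral.mpr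
        ⟨Polynomial.X^2 + Polynomial.C 59, by
          exact (Polynomial.monic_X_pow_add_C _ (by norm_num)), by simp [hr]⟩)
    · exact (isAlgebraic_iff_isIntegral.mpr
        ⟨Polynomial.X^2 + Polynomial.C 2, by
          exact (Polynomial.monic_X_pow_add_C _ (by norm_num)), by simp [hs]⟩)
  have htop : Algebra.adjoin ℚ ({r, s} : Set E) = ⊤ := by
    have := IntermediateField.adjoin_toSubalgebra_of_isAlgebraic halg
    rw [hgen] at this
    rw [← this]
    rfl
  have hx : x ∈ Algebra.adjoin ℚ ({r, s} : Set E) := by rw [htop]; trivial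
  induction hx using Algebra.adjoin_induction with
  | mem y hy =>
    rcases hy with rfl | rfl
    · exact ⟨(0, 1, 0, 0), by push_cast; ring⟩
    · exact ⟨(0, 0, 1, 0), by push_cast; ring⟩
  | algebraMap c => exact ⟨(c, 0, 0, 0), by push_cast [eq_ratCast]; ring⟩
  | add y z hy hz ihy ihz =>
    obtain ⟨⟨a1,a2,a3,a4⟩, ha⟩ := ihy
    obtain ⟨⟨b1,b2,b3,b4⟩, hb⟩ := ihz
    exact ⟨(a1+b1, a2+b2, a3+b3, a4+b4), by rw [ha, hb]; push_cast; ring⟩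
  | mul y z hy hz ihy ihz =>
    obtain ⟨⟨a1,a2,a3,a4⟩, ha⟩ := ihy
    obtain ⟨⟨b1,b2,b3,b4⟩, hb⟩ := ihz
    refine ⟨(a1*b1 - 59*(a2*b2) - 2*(a3*b3) + 118*(a4*b4),
             a1*b2 + a2*b1 - 2*(a3*b4) - 2*(a4*b3),
             a1*b3 + a3*b1 - 59*(a2*b4) - 59*(a4*b2),
             a1*b4 + a4*b1 + a2*b3 + a3*b2), ?_⟩
    rw [ha, hb, Lmul' hr hs]


set_option maxHeartbeats 2000000 in
lemma exists_conj (hr : r ^ 2 = -59) (hs : s ^ 2 = -2)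
    (huniq : ∀ p q m n : ℚ, (p : E) + q * r + m * s + n * (r*s) = 0 →
      p = 0 ∧ q = 0 ∧ m = 0 ∧ n = 0)
    (hrep : ∀ x : E, ∃ c : ℚ × ℚ × ℚ × ℚ,
      x = (c.1 : E) + c.2.1 * r + c.2.2.1 * s + c.2.2.2 * (r*s))
    (ε δ : ℚ) (hε : ε = 1 ∨ ε = -1) (hδ : δ = 1 ∨ δ = -1) :
    ∃ σ : E →+* E, ∀ p q m n : ℚ,
      σ ((p : E) + q * r + m * s + n * (r*s)) =
        (p : E) + ((ε*q : ℚ) : E) * r + ((δ*m : ℚ) : E) * s + ((ε*δ*n : ℚ) : E) * (r*s) := by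
  have Lmul'' := fun p q m n p' q' m' n' => Lmul' (E := E) hr hs p q m n p' q' m' n'
  choose f hf using hrep
  have uniq2 : ∀ a1 a2 a3 a4 b1 b2 b3 b4 : ℚ,
      ((a1:E) + a2*r + a3*s + a4*(r*s) = (b1:E) + b2*r + b3*s + b4*(r*s)) →
      a1 = b1 ∧ a2 = b2 ∧ a3 = b3 ∧ a4 = b4 := by
    intro a1 a2 a3 a4 b1 b2 b3 b4 h
    obtain ⟨h1, h2, h3, h4⟩ := huniq (a1-b1) (a2-b2) (a3-b3) (a4-b4)
      (by push_cast; linear_combination h)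
    refine ⟨by linarith, by linarith, by linarith, by linarith⟩
  set g : E → E := fun x =>
    ((f x).1 : E) + ((ε*(f x).2.1 : ℚ) : E) * r + ((δ*(f x).2.2.1 : ℚ) : E) * s
      + ((ε*δ*(f x).2.2.2 : ℚ) : E) * (r*s) with hg
  have gspec : ∀ p q m n : ℚ, g ((p : E) + q * r + m * s + n * (r*s)) =
      (p : E) + ((ε*q : ℚ) : E) * r + ((δ*m : ℚ) : E) * s + ((ε*δ*n : ℚ) : E) * (r*s) := by
    intro p q m n
    obtain ⟨h1, h2, h3, h4⟩ := uniq2 _ _ _ _ _ _ _ _ (hf ((p : E) + q * r + m * s + n * (r*s))).symm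
    rw [hg]
    simp only
    rw [h1, h2, h3, h4]
  refine ⟨{ toFun := g, map_one' := ?_, map_mul' := ?_, map_zero' := ?_, map_add' := ?_ }, gspec⟩
  · have h1 : (1 : E) = ((1:ℚ):E) + (0:ℚ)*r + (0:ℚ)*s + (0:ℚ)*(r*s) := by push_cast; ring
    rw [h1, gspec]; push_cast; ring
  · intro x y
    show g (x * y) = g x * g y
    conv_lhs => rw [hf x, hf y]
    conv_rhs => rw [hf x, hf y]
    rw [Lmul'', gspec, gspec, gspec, Lmul'']
    rcases hε with rfl | rfl <;> rcases hδ with rfl | rfl <;> (push_cast; ring)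
  · show g 0 = 0
    have h1 : (0 : E) = ((0:ℚ):E) + (0:ℚ)*r + (0:ℚ)*s + (0:ℚ)*(r*s) := by push_cast; ring
    rw [h1, gspec]; push_cast; ring
  · intro x y
    show g (x + y) = g x + g y
    conv_lhs => rw [hf x, hf y]
    conv_rhs => rw [hf x, hf y]
    have hsum : ∀ a1 a2 a3 a4 b1 b2 b3 b4 : ℚ,
        ((a1:E) + a2*r + a3*s + a4*(r*s)) + ((b1:E) + b2*r + b3*s + b4*(r*s)) =
        ((a1+b1 : ℚ):E) + ((a2+b2 : ℚ):E)*r + ((a3+b3 : ℚ):E)*s + ((a4+b4 : ℚ):E)*(r*s) := by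
      intro a1 a2 a3 a4 b1 b2 b3 b4; push_cast; ring
    rw [hsum, gspec, gspec, gspec]
    push_cast; ring

end

private lemma spar : ∀ k : ℤ, ∃ t : ℤ, k^2 = k + 2*t := by
  intro k
  rcases Int.even_or_odd k with ⟨m, rfl⟩ | ⟨m, rfl⟩
  · exact ⟨2*m^2 - m, by ring⟩
  · exact ⟨2*m^2 + m, by ring⟩

private lemma evod (k : ℤ) : (∃ m, k = 2*m) ∨ (∃ m, k = 2*m+1) := by
  rcases Int.even_or_odd k with ⟨m, hm⟩ | ⟨m, hm⟩
  · exact Or.inl ⟨m, by omega⟩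
  · exact Or.inr ⟨m, by omega⟩

private lemma key (u1 v1 u2 v2 w z : ℤ)
    (h1 : 2 ∣ u1 - v1) (h2 : 2 ∣ u2 - v2) (h3 : 2 ∣ w - z)
    (e1 : 2*u1^2 - 118*v1^2 + u2^2 - 59*v2^2 = 16*w)
    (e2 : 2*(u1*v1) + u2*v2 = 8*z) :
    (∃ U V : ℤ, u1 = 2*U ∧ v1 = 2*V ∧ 2 ∣ U - V) ∧
    (∃ C D : ℤ, u2 = 4*C ∧ v2 = 4*D ∧ 2 ∣ C - D) := by
  -- Step A : u1, v1 both even, using e2 only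
  obtain ⟨e, rfl⟩ : ∃ e, u1 = 2*e := by
    rcases evod u1 with ⟨e, he⟩ | ⟨e, rfl⟩
    · exact ⟨e, he⟩
    exfalso
    obtain ⟨f, rfl⟩ : ∃ f, v1 = 2*f+1 := by
      rcases evod v1 with ⟨f, rfl⟩ | ⟨f, hf⟩
      · omega
      · exact ⟨f, hf⟩
    obtain ⟨P, hP⟩ : ∃ P, e*f = P := ⟨_, rfl⟩
    rcases evod u2 with ⟨γ, rfl⟩ | ⟨γ, rfl⟩
    · obtain ⟨δ, rfl⟩ : ∃ δ, v2 = 2*δ := by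
        rcases evod v2 with ⟨δ, hδ⟩ | ⟨δ, hδ⟩
        · exact ⟨δ, hδ⟩
        · omega
      obtain ⟨Q, hQ⟩ : ∃ Q, γ*δ = Q := ⟨_, rfl⟩
      have E : 8*P + 4*e + 4*f + 2 + 4*Q = 8*z := by linear_combination e2 - 8*hP - 4*hQ
      omega
    · obtain ⟨δ, rfl⟩ : ∃ δ, v2 = 2*δ+1 := by
        rcases evod v2 with ⟨δ, hδ⟩ | ⟨δ, hδ⟩
        · omega
        · exact ⟨δ, hδ⟩
      obtain ⟨Q, hQ⟩ : ∃ Q, γ*δ = Q := ⟨_, rfl⟩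
      have E : 8*P + 4*e + 4*f + 2 + 4*Q + 2*γ + 2*δ + 1 = 8*z := by
        linear_combination e2 - 8*hP - 4*hQ
      omega
  obtain ⟨f, rfl⟩ : ∃ f, v1 = 2*f := by
    rcases evod v1 with ⟨f, hf⟩ | ⟨f, hf⟩
    · exact ⟨f, hf⟩
    · omega
  -- Step B : u2, v2 both even, using e1
  obtain ⟨E2, hE2⟩ : ∃ t, e^2 = t := ⟨_, rfl⟩
  obtain ⟨F2, hF2⟩ : ∃ t, f^2 = t := ⟨_, rfl⟩
  obtain ⟨c, rfl⟩ : ∃ c, u2 = 2*c := by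
    rcases evod u2 with ⟨c, hc⟩ | ⟨c, rfl⟩
    · exact ⟨c, hc⟩
    exfalso
    obtain ⟨δ, rfl⟩ : ∃ δ, v2 = 2*δ+1 := by
      rcases evod v2 with ⟨δ, hδ⟩ | ⟨δ, hδ⟩
      · omega
      · exact ⟨δ, hδ⟩
    obtain ⟨tc, htc⟩ := spar c
    obtain ⟨td, htd⟩ := spar δ
    have E : 8*E2 - 472*F2 + 8*c + 8*tc + 1 - 472*δ - 472*td - 59 = 16*w := by
      linear_combination e1 - 8*hE2 + 472*hF2 - 4*htc + 236*htd
    omega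
  obtain ⟨d, rfl⟩ : ∃ d, v2 = 2*d := by
    rcases evod v2 with ⟨d, hd⟩ | ⟨d, hd⟩
    · exact ⟨d, hd⟩
    · omega
  -- Step C : c, d both even
  have e1' : 8*E2 - 472*F2 + 4*c^2 - 236*d^2 = 16*w := by
    linear_combination e1 - 8*hE2 + 472*hF2
  obtain ⟨P, hP⟩ : ∃ P, e*f = P := ⟨_, rfl⟩
  have e2' : 8*P + 4*(c*d) = 8*z := by linear_combination e2 - 8*hP
  obtain ⟨g, rfl⟩ : ∃ g, c = 2*g := by
    rcases evod c with ⟨g, hg⟩ | ⟨g, rfl⟩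
    · exact ⟨g, hg⟩
    exfalso
    obtain ⟨tg, htg⟩ := spar g
    rcases evod d with ⟨δ, rfl⟩ | ⟨δ, rfl⟩
    · obtain ⟨D2, hD2⟩ : ∃ t, δ^2 = t := ⟨_, rfl⟩
      have E : 8*E2 - 472*F2 + 32*g + 32*tg + 4 - 944*D2 = 16*w := by
        linear_combination e1' - 16*htg + 944*hD2
      omega
    · obtain ⟨Q, hQ⟩ : ∃ Q, g*δ = Q := ⟨_, rfl⟩
      have E : 8*P + 16*Q + 8*g + 8*δ + 4 = 8*z := by
        linear_combination e2' - 16*hQ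
      omega
  obtain ⟨h, rfl⟩ : ∃ h, d = 2*h := by
    rcases evod d with ⟨h, hh⟩ | ⟨h, rfl⟩
    · exact ⟨h, hh⟩
    exfalso
    obtain ⟨th, hth⟩ := spar h
    obtain ⟨G2, hG2⟩ : ∃ t, g^2 = t := ⟨_, rfl⟩
    have E : 8*E2 - 472*F2 + 16*G2 - 1888*h - 1888*th - 236 = 16*w := by
      linear_combination e1' - 16*hG2 + 944*hth
    omega
  -- Step D : e ≡ f mod 2
  obtain ⟨te, hte⟩ := spar e
  obtain ⟨tf, htf⟩ := spar f
  obtain ⟨tg, htg⟩ := spar g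
  obtain ⟨th, hth⟩ := spar h
  have E1 : 8*e + 16*te - 472*f - 944*tf + 16*g + 32*tg - 944*h - 1888*th = 16*w := by
    linear_combination e1 - 8*hte + 472*htf - 16*htg + 944*hth
  have hef : 2 ∣ e - f := by omega
  -- Step E : g ≡ h mod 2
  obtain ⟨k, hk⟩ : ∃ k, e = f + 2*k := by
    obtain ⟨k, hk'⟩ := hef; exact ⟨k, by omega⟩
  subst hk
  obtain ⟨K2, hK2⟩ : ∃ t, k^2 = t := ⟨_, rfl⟩
  obtain ⟨GH, hGH⟩ : ∃ t, g*h = t := ⟨_, rfl⟩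
  have EE : 16*w - 16*z = -480*f - 960*tf + 32*K2 + 16*g + 32*tg - 944*h - 1888*th - 32*GH := by
    linear_combination (-1)*e1 + 2*e2 - 480*htf + 32*hK2 + 16*htg - 944*hth - 32*hGH
  have hgh : 2 ∣ g - h := by omega
  exact ⟨⟨f + 2*k, f, rfl, rfl, by omega⟩, ⟨g, h, by ring, by ring, hgh⟩⟩

private lemma evod' (k : ℤ) : (∃ m, k = 2*m) ∨ (∃ m, k = 2*m+1) := by
  rcases Int.even_or_odd k with ⟨m, hm⟩ | ⟨m, hm⟩
  · exact Or.inl ⟨m, by omega⟩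
  · exact Or.inr ⟨m, by omega⟩

private lemma parity_two (U V W : ℤ) (h : U^2 + 59*V^2 = 4*W) : 2 ∣ U - V := by
  rcases evod' U with ⟨a, rfl⟩ | ⟨a, rfl⟩ <;> rcases evod' V with ⟨b, rfl⟩ | ⟨b, rfl⟩
  · omega
  · exfalso
    obtain ⟨A, hA⟩ : ∃ t, a^2 = t := ⟨_, rfl⟩
    obtain ⟨B, hB⟩ : ∃ t, b^2 = t := ⟨_, rfl⟩
    have E : 4*A + 236*B + 236*b + 59 = 4*W := by linear_combination h - 4*hA - 236*hB
    omega
  · exfalso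
    obtain ⟨A, hA⟩ : ∃ t, a^2 = t := ⟨_, rfl⟩
    obtain ⟨B, hB⟩ : ∃ t, b^2 = t := ⟨_, rfl⟩
    have E : 4*A + 4*a + 1 + 236*B = 4*W := by linear_combination h - 4*hA - 236*hB
    omega
  · omega

private lemma four_dvd (U V : ℤ) (hpar : 2 ∣ U - V) : ∃ k, U^2 + 59*V^2 = 4*k := by
  rcases evod' U with ⟨a, rfl⟩ | ⟨a, rfl⟩ <;> rcases evod' V with ⟨b, rfl⟩ | ⟨b, rfl⟩
  · exact ⟨a^2 + 59*b^2, by ring⟩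
  · omega
  · omega
  · exact ⟨a^2 + a + 59*b^2 + 59*b + 15, by ring⟩

section
variable {E : Type*} [Field E] [CharZero E] {r s : E}

private lemma mk_integral (hr : r ^ 2 = -59) (U V : ℤ) (hpar : 2 ∣ U - V) :
    IsIntegral ℤ ((((U:ℚ)/2 : ℚ) : E) + (((V:ℚ)/2 : ℚ) : E) * r) := by
  obtain ⟨k, hk⟩ := four_dvd U V hpar
  refine ⟨Polynomial.X^2 - Polynomial.C U * Polynomial.X + Polynomial.C k, ?_, ?_⟩
  · apply Polynomial.Monic.add_of_left
    · apply Polynomial.monic_X_pow_sub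
      exact lt_of_le_of_lt (Polynomial.degree_C_mul_X_le _) (by norm_num)
    · apply lt_of_le_of_lt (Polynomial.degree_C_le)
      have : ((Polynomial.X : Polynomial ℤ)^2 - Polynomial.C U * Polynomial.X).degree = 2 := by
        compute_degree!
      rw [this]; norm_num
  · have hk' : ((U:E))^2 + 59*((V:E))^2 = 4*((k:E)) := by exact_mod_cast congrArg (fun t : ℤ => (t : E)) hk
    simp only [Polynomial.eval₂_add, Polynomial.eval₂_sub, Polynomial.eval₂_mul,
      Polynomial.eval₂_pow, Polynomial.eval₂_X, Polynomial.eval₂_C]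
    simp only [eq_intCast]
    push_cast
    linear_combination (((V:E))^2/4)*hr - (1/4)*hk'
end

section
variable {E : Type*} [Field E] [CharZero E] {r s : E}

lemma rat_int_of_isIntegral' {c : ℚ} (h : IsIntegral ℤ (c : E)) : ∃ k : ℤ, (k : ℚ) = c := by
  have hinj : Function.Injective (algebraMap ℚ E) := (algebraMap ℚ E).injective
  have h2 : IsIntegral ℤ c := by
    rw [← isIntegral_algHom_iff ((algebraMap ℚ E).toIntAlgHom) hinj]
    simpa [RingHom.toIntAlgHom, eq_ratCast] using h
  exact IsIntegrallyClosed.isIntegral_iff.mp h2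

private lemma CF (hr : r ^ 2 = -59) (τ : E →+* E)
    (hτ : ∀ p q m n : ℚ, τ ((p : E) + q * r + m * s + n * (r*s)) =
      (p : E) + ((-1*q : ℚ) : E) * r + ((1*m : ℚ) : E) * s + ((-1*1*n : ℚ) : E) * (r*s))
    (α β : ℚ) (z : E) (hz : z = (α:E) + β*r) (hint : IsIntegral ℤ z) :
    ∃ U V : ℤ, 2 ∣ U - V ∧ (U:ℚ) = 2*α ∧ (V:ℚ) = 2*β := by
  have hτz : τ z = (α:E) - β*r := by
    rw [hz, show ((α:E) + β*r) = ((α:E) + β*r + ((0:ℚ):E)*s + ((0:ℚ):E)*(r*s)) by push_cast; ring,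
      hτ]
    push_cast; ring
  have hτint : IsIntegral ℤ (τ z) := hint.map τ.toIntAlgHom
  have h2a : IsIntegral ℤ (((2*α : ℚ) : E)) := by
    have h' : ((2*α : ℚ) : E) = z + τ z := by rw [hτz, hz]; push_cast; ring
    rw [h']; exact hint.add hτint
  obtain ⟨U, hU⟩ := rat_int_of_isIntegral' h2a
  have hnm : IsIntegral ℤ (((α^2 + 59*β^2 : ℚ) : E)) := by
    have h' : ((α^2 + 59*β^2 : ℚ) : E) = z * τ z := by
      rw [hτz, hz]; push_cast; linear_combination ((β:E))^2 * hr
    rw [h']; exact hint.mul hτint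
  obtain ⟨W, hW⟩ := rat_int_of_isIntegral' hnm
  have hsq : ((118*β : ℚ))^2 = ((59*(4*W - U^2) : ℤ) : ℚ) := by
    push_cast
    rw [hW, hU]; ring
  have hint118 : IsIntegral ℤ (118*β : ℚ) := by
    refine ⟨Polynomial.X^2 - Polynomial.C (59*(4*W - U^2)), ?_, ?_⟩
    · exact Polynomial.monic_X_pow_sub_C _ (by norm_num)
    · simp only [Polynomial.eval₂_sub, Polynomial.eval₂_pow, Polynomial.eval₂_X,
        Polynomial.eval₂_C]
      simp only [eq_intCast]
      rw [show ((59*(4*W - U^2) : ℤ) : ℚ) = (118*β)^2 from hsq.symm]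
      ring
  obtain ⟨C, hC⟩ := IsIntegrallyClosed.isIntegral_iff.mp hint118
  rw [eq_intCast] at hC
  have hC2 : C^2 = 59*(4*W - U^2) := by
    have : ((C:ℚ))^2 = ((59*(4*W - U^2) : ℤ) : ℚ) := by
      rw [hC]; push_cast; push_cast at hsq; linear_combination hsq
    exact_mod_cast this
  have h59 : (59 : ℤ) ∣ C := by
    have hp : Prime (59 : ℤ) := by norm_num
    exact hp.dvd_of_dvd_pow (n := 2) ⟨4*W - U^2, hC2⟩
  obtain ⟨V, rfl⟩ := h59
  have hV : (V:ℚ) = 2*β := by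
    have : (59:ℚ) * V = 118*β := by exact_mod_cast hC
    linarith
  have hUV : U^2 + 59*V^2 = 4*W := by
    have : ((U:ℚ))^2 + 59*((V:ℚ))^2 = 4*((W:ℚ)) := by rw [hU, hV, hW]; ring
    exact_mod_cast this
  exact ⟨U, V, parity_two U V W hUV, hU, hV⟩

end

theorem ringOfIntegers_of_biquadratic
    (E : Type*) [Field E] [NumberField E]
    (r s : E) (hr : r ^ 2 = -59) (hs : s ^ 2 = -2)
    (hgen : IntermediateField.adjoin ℚ {r, s} = ⊤) :
    ∀ x : E, IsIntegral ℤ x ↔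
      ∃ a b : E, a ∈ IntermediateField.adjoin ℚ {r} ∧ b ∈ IntermediateField.adjoin ℚ {r} ∧
        IsIntegral ℤ a ∧ IsIntegral ℤ b ∧ x = a + b * s := by
  intro x
  have hsint : IsIntegral ℤ s := by
    refine ⟨Polynomial.X^2 + Polynomial.C 2, Polynomial.monic_X_pow_add_C _ (by norm_num), ?_⟩
    simp [hs]
  constructor
  · intro hint
    have huniq := fun p q m n h => L1 hr hs p q m n h
    have hrep := fun y => Lrepr hr hs hgen y
    obtain ⟨σ, hσ⟩ := exists_conj hr hs huniq hrep 1 (-1) (Or.inl rfl) (Or.inr rfl)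
    obtain ⟨τ, hτ⟩ := exists_conj hr hs huniq hrep (-1) 1 (Or.inr rfl) (Or.inl rfl)
    obtain ⟨⟨p, q, m, n⟩, hx⟩ := hrep x
    simp only at hx
    have hσx : σ x = (p:E) + q*r - m*s - n*(r*s) := by
      rw [hx, hσ]; push_cast; ring
    have hσint : IsIntegral ℤ (σ x) := hint.map σ.toIntAlgHom
    obtain ⟨u1, v1, hp1, hu1, hv1⟩ := CF hr τ hτ (2*p) (2*q) (x + σ x)
      (by rw [hσx, hx]; push_cast; ring) (hint.add hσint)
    obtain ⟨u2, v2, hp2, hu2, hv2⟩ := CF hr τ hτ (4*m) (4*n) ((σ x - x) * s)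
      (by rw [hσx, hx]; push_cast; linear_combination (-2*(m:E) - 2*(n:E)*r)*hs)
      ((hσint.sub hint).mul hsint)
    obtain ⟨w, z', hp3, hw, hz'⟩ := CF hr τ hτ
      (p^2 - 59*q^2 + 2*m^2 - 118*n^2) (2*(p*q) + 4*(m*n)) (x * σ x)
      (by rw [hσx, hx]; push_cast;
          linear_combination ((q:E)^2 + 2*(n:E)^2)*hr - (((m:E) + (n:E)*r)^2)*hs)
      (hint.mul hσint)
    have e1 : 2*u1^2 - 118*v1^2 + u2^2 - 59*v2^2 = 16*w := by
      have : (2*(u1:ℚ)^2 - 118*(v1:ℚ)^2 + (u2:ℚ)^2 - 59*(v2:ℚ)^2 : ℚ) = 16*(w:ℚ) := by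
        rw [hu1, hv1, hu2, hv2, hw]; ring
      exact_mod_cast this
    have e2 : 2*(u1*v1) + u2*v2 = 8*z' := by
      have : (2*((u1:ℚ)*(v1:ℚ)) + (u2:ℚ)*(v2:ℚ) : ℚ) = 8*(z':ℚ) := by
        rw [hu1, hv1, hu2, hv2, hz']; ring
      exact_mod_cast this
    obtain ⟨⟨U, V, hU1, hV1, hUV⟩, ⟨C, D, hC1, hD1, hCD⟩⟩ :=
      key u1 v1 u2 v2 w z' hp1 hp2 hp3 e1 e2
    have hpU : (p:ℚ) = (U:ℚ)/2 := by
      have h4 : ((u1:ℚ)) = 4*p := hu1.trans (by ring)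
      rw [hU1] at h4; push_cast at h4; linarith
    have hqV : (q:ℚ) = (V:ℚ)/2 := by
      have h4 : ((v1:ℚ)) = 4*q := hv1.trans (by ring)
      rw [hV1] at h4; push_cast at h4; linarith
    have hmC : (m:ℚ) = (C:ℚ)/2 := by
      have h8 : ((u2:ℚ)) = 8*m := hu2.trans (by ring)
      rw [hC1] at h8; push_cast at h8; linarith
    have hnD : (n:ℚ) = (D:ℚ)/2 := by
      have h8 : ((v2:ℚ)) = 8*n := hv2.trans (by ring)
      rw [hD1] at h8; push_cast at h8; linarith
    have hrmem : r ∈ IntermediateField.adjoin ℚ {r} :=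
      IntermediateField.subset_adjoin ℚ {r} rfl
    have hratmem : ∀ c : ℚ, ((c:ℚ):E) ∈ IntermediateField.adjoin ℚ {r} := by
      intro c
      rw [← eq_ratCast (algebraMap ℚ E) c]
      exact (IntermediateField.adjoin ℚ {r}).algebraMap_mem c
    refine ⟨(p:E) + q*r, (m:E) + n*r, ?_, ?_, ?_, ?_, ?_⟩
    · exact add_mem (hratmem p) (mul_mem (hratmem q) hrmem)
    · exact add_mem (hratmem m) (mul_mem (hratmem n) hrmem)
    · rw [show (p:ℚ) = ((U:ℚ)/2 : ℚ) from hpU, show (q:ℚ) = ((V:ℚ)/2 : ℚ) from hqV]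
      exact mk_integral hr U V hUV
    · rw [show (m:ℚ) = ((C:ℚ)/2 : ℚ) from hmC, show (n:ℚ) = ((D:ℚ)/2 : ℚ) from hnD]
      exact mk_integral hr C D hCD
    · rw [hx]; push_cast; ring
  · rintro ⟨a, b, -, -, ha, hb, rfl⟩
    exact ha.add (hb.mul hsint)
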